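/- Let ψ : ℝ^d → [0,1] be measurable with ∫ ψ(z) p(z) dz = s, where p is the standard Gaussian density on ℝ^d. Then for any unit vector u ∈ ℝ^d, ∫ ψ(z)(u·z)p(z) dz ≤ ∫ 1{u·z ≥ -Φ⁻¹(s)}(u·z)p(z) dz = φ(Φ⁻¹(s)). -/

import Mathlib

open MeasureTheory

/-- Standard normal pdf `φ`. -/
noncomputable def stdnpdf (t : ℝ) : ℝ := (Real.sqrt (2 * Real.pi))⁻¹ * Real.exp (-t ^ 2 / 2)

/-- Standard normal cdf `Φ`. -/
noncomputable def stdncdf (t : ℝ) : ℝ := ∫ s in Set.Iic t, stdnpdf s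

/-- Inverse of the standard normal cdf, `Φ⁻¹ : (0,1) → ℝ`. -/
noncomputable def stdninv : ℝ → ℝ := Function.invFun stdncdf

/-- Density of the standard Gaussian `N(0, I_d)` on `ℝ^d`. -/
noncomputable def gpdf (d : ℕ) (z : EuclideanSpace ℝ (Fin d)) : ℝ :=
  (2 * Real.pi) ^ (-(d : ℝ) / 2) * Real.exp (-‖z‖ ^ 2 / 2)

section Aux
open Set Filter ProbabilityTheory

lemma stdnpdf_eq : stdnpdf = gaussianPDFReal 0 1 := by
  funext t
  simp [stdnpdf, gaussianPDFReal]

lemma stdnpdf_nonneg (t : ℝ) : 0 ≤ stdnpdf t := by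
  unfold stdnpdf; positivity

lemma stdnpdf_integrable : Integrable stdnpdf := by
  rw [stdnpdf_eq]; exact integrable_gaussianPDFReal 0 1

lemma stdnpdf_integral : ∫ t, stdnpdf t = 1 := by
  rw [stdnpdf_eq]; exact integral_gaussianPDFReal_eq_one 0 one_ne_zero

lemma stdnpdf_mul_integrable : Integrable (fun t => t * stdnpdf t) := by
  have h : (fun t => t * stdnpdf t)
      = fun t => (Real.sqrt (2*Real.pi))⁻¹ * (t * Real.exp (-(2⁻¹) * t^2)) := by
    funext t
    rw [stdnpdf, show -t^2/2 = -(2⁻¹) * t^2 by ring]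
    ring
  rw [h]
  exact (integrable_mul_exp_neg_mul_sq (by norm_num)).const_mul _

lemma stdnpdf_neg (t : ℝ) : stdnpdf (-t) = stdnpdf t := by simp [stdnpdf]

lemma stdncdf_continuous : Continuous stdncdf := by
  have h : ∀ t, stdncdf t = stdncdf 0 + ∫ x in (0:ℝ)..t, stdnpdf x := by
    intro t
    have := intervalIntegral.integral_Iic_sub_Iic (f := stdnpdf) (μ := volume)
      (stdnpdf_integrable.integrableOn) (stdnpdf_integrable.integrableOn) (a := 0) (b := t)
    unfold stdncdf
    linarith
  rw [funext h]
  exact continuous_const.add (stdnpdf_integrable.continuous_primitive 0)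

lemma stdncdf_stdninv {s : ℝ} (hs : s ∈ Set.Ioo (0:ℝ) 1) : stdncdf (stdninv s) = s := by
  have hcdf : ∀ x, cdf (gaussianReal 0 1) x = stdncdf x := by
    intro x
    rw [cdf_eq_real, measureReal_def, gaussianReal_apply_eq_integral 0 one_ne_zero,
      ENNReal.toReal_ofReal (integral_nonneg fun t => gaussianPDFReal_nonneg 0 1 t)]
    rw [stdncdf, stdnpdf_eq]
  have htop : Tendsto stdncdf atTop (nhds 1) := by
    have := tendsto_cdf_atTop (μ := gaussianReal 0 1)
    rwa [funext hcdf] at this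
  have hbot : Tendsto stdncdf atBot (nhds 0) := by
    have := tendsto_cdf_atBot (μ := gaussianReal 0 1)
    rwa [funext hcdf] at this
  obtain ⟨y₀, hy₀⟩ := (htop.eventually (eventually_gt_nhds hs.2)).exists
  obtain ⟨x₀, hx₀, hx₀y⟩ :=
    ((hbot.eventually (eventually_lt_nhds hs.1)).and (eventually_le_atBot y₀)).exists
  obtain ⟨c, _, hc⟩ := intermediate_value_Icc hx₀y stdncdf_continuous.continuousOn
    ⟨hx₀.le, hy₀.le⟩
  exact Function.invFun_eq ⟨c, hc⟩

lemma int_Ici_stdnpdf (c : ℝ) : ∫ t in Set.Ici (-c), stdnpdf t = stdncdf c := by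
  rw [MeasureTheory.integral_Ici_eq_integral_Ioi, ← integral_comp_neg_Iic]
  simp_rw [stdnpdf_neg]
  rfl

lemma stdnpdf_tendsto : Tendsto stdnpdf atTop (nhds 0) := by
  have h1 : Tendsto (fun t:ℝ => -t^2/2) atTop atBot := by
    apply Filter.Tendsto.atBot_div_const (by norm_num : (0:ℝ) < 2)
    exact (tendsto_neg_atTop_atBot).comp (tendsto_pow_atTop two_ne_zero)
  have h2 := (Real.tendsto_exp_atBot.comp h1).const_mul ((Real.sqrt (2*Real.pi))⁻¹)
  have he : stdnpdf = fun t => (Real.sqrt (2*Real.pi))⁻¹ * Real.exp ((fun t:ℝ => -t^2/2) t) := by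
    funext t; rw [stdnpdf]
  rw [he]
  simpa [Function.comp_def] using h2

lemma int_Ici_id_stdnpdf (c : ℝ) : ∫ t in Set.Ici (-c), t * stdnpdf t = stdnpdf c := by
  have hderiv : ∀ x ∈ Set.Ici (-c), HasDerivAt (fun t => -stdnpdf t) (x * stdnpdf x) x := by
    intro x _
    have h1 : HasDerivAt (fun t : ℝ => -t^2/2) (-x) x := by
      have := ((hasDerivAt_pow 2 x).neg.div_const 2)
      exact this.congr_deriv (by norm_num; ring)
    have h2 := ((h1.exp.const_mul ((Real.sqrt (2*Real.pi))⁻¹))).neg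
    exact h2.congr_deriv (by rw [stdnpdf]; ring)
  have hint : IntegrableOn (fun t => t * stdnpdf t) (Set.Ioi (-c)) :=
    stdnpdf_mul_integrable.integrableOn
  have htend : Tendsto (fun t => -stdnpdf t) atTop (nhds 0) := by
    have := stdnpdf_tendsto.neg
    simpa using this
  rw [MeasureTheory.integral_Ici_eq_integral_Ioi,
    MeasureTheory.integral_Ioi_of_hasDerivAt_of_tendsto' hderiv hint htend]
  rw [stdnpdf_neg]
  ring

lemma key (d : ℕ) (u : EuclideanSpace ℝ (Fin d)) (hu : ‖u‖ = 1) (F : ℝ → ℝ)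
    (hFi : Integrable (fun t => F t * stdnpdf t)) :
    Integrable (fun z => F (inner ℝ u z : ℝ) * gpdf d z) ∧
      ∫ z, F (inner ℝ u z : ℝ) * gpdf d z = ∫ t, F t * stdnpdf t := by
  classical
  rcases Nat.eq_zero_or_pos d with hd | hd
  · exfalso
    subst hd
    have : u = 0 := Subsingleton.elim u 0
    rw [this, norm_zero] at hu
    norm_num at hu
  set i0 : Fin d := ⟨0, hd⟩ with hi0
  have hortho : Orthonormal ℝ (({i0} : Set (Fin d)).restrict (fun _ : Fin d => u)) := by
    constructor
    · intro i; exact hu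
    · intro i j hij
      exact absurd (Subtype.ext ((Set.mem_singleton_iff.mp i.2).trans
        (Set.mem_singleton_iff.mp j.2).symm)) hij
  have hcard : Module.finrank ℝ (EuclideanSpace ℝ (Fin d)) = Fintype.card (Fin d) := by
    simp [finrank_euclideanSpace]
  obtain ⟨b, hb⟩ := hortho.exists_orthonormalBasis_extension_of_card_eq hcard
  have hbu : b i0 = u := hb i0 rfl
  set m : EuclideanSpace ℝ (Fin d) ≃ᵐ (Fin d → ℝ) :=
    b.repr.toHomeomorph.toMeasurableEquiv.trans (MeasurableEquiv.toLp 2 (Fin d → ℝ)).symm with hmdef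
  have hmz : ∀ (z : EuclideanSpace ℝ (Fin d)) (i : Fin d), m z i = b.repr z i := fun z i => rfl
  have hm : MeasurePreserving m volume volume :=
    (EuclideanSpace.volume_preserving_symm_measurableEquiv_toLp (Fin d)).comp b.measurePreserving_repr
  set g : Fin d → ℝ → ℝ := fun i => if i = i0 then (fun t => F t * stdnpdf t) else stdnpdf with hg
  have hgi : ∀ i, Integrable (g i) := by
    intro i; by_cases h : i = i0 <;> simp [hg, h, hFi, stdnpdf_integrable]
  have hprod : ∀ z : EuclideanSpace ℝ (Fin d),
      F (inner ℝ u z : ℝ) * gpdf d z = ∏ i, g i (m z i) := by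
    intro z
    have hT : (inner ℝ u z : ℝ) = m z i0 := by
      rw [hmz, ← hbu, ← OrthonormalBasis.repr_apply_apply]
    have hnorm : gpdf d z = ∏ i, stdnpdf (m z i) := by
      have h1 : ‖z‖ ^ 2 = ∑ i, (m z i) ^ 2 := by
        rw [← b.repr.norm_map z, EuclideanSpace.norm_eq, Real.sq_sqrt (by positivity)]
        simp [hmz, sq_abs]
      have h2π : (0:ℝ) ≤ 2 * Real.pi := by positivity
      rw [gpdf, h1]
      simp only [stdnpdf]
      rw [Finset.prod_mul_distrib, Finset.prod_const, ← Real.exp_sum]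
      congr 1
      · rw [Finset.card_univ, Fintype.card_fin,
          ← Real.rpow_natCast ((Real.sqrt (2*Real.pi))⁻¹) d, Real.sqrt_eq_rpow,
          ← Real.rpow_neg h2π, ← Real.rpow_mul h2π]
        norm_num
        congr 1
        ring
      · congr 1
        rw [← Finset.sum_neg_distrib, Finset.sum_div]
    rw [hT, hnorm,
      ← Finset.mul_prod_erase Finset.univ (fun i => g i (m z i)) (Finset.mem_univ i0),
      ← Finset.mul_prod_erase Finset.univ (fun i => stdnpdf (m z i)) (Finset.mem_univ i0),
      Finset.prod_congr rfl (fun i hi => by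
        simp [hg, Finset.ne_of_mem_erase hi] :
        ∀ i ∈ Finset.univ.erase i0, g i (m z i) = stdnpdf (m z i))]
    simp [hg, mul_assoc]
  have hP : Integrable (fun x : Fin d → ℝ => ∏ i, g i (x i)) := Integrable.fintype_prod hgi
  have h2 : (fun z => F (inner ℝ u z : ℝ) * gpdf d z)
      = (fun x : Fin d → ℝ => ∏ i, g i (x i)) ∘ m := funext fun z => hprod z
  constructor
  · rw [h2]; exact (hm.integrable_comp_emb m.measurableEmbedding).mpr hP
  · rw [h2]
    rw [show ((fun x : Fin d → ℝ => ∏ i, g i (x i)) ∘ m)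
        = fun z => ∏ i, g i (m z i) from rfl]
    rw [hm.integral_comp' (fun x : Fin d → ℝ => ∏ i, g i (x i))]
    rw [MeasureTheory.integral_fintype_prod_volume_eq_prod (ι := Fin d) g,
      ← Finset.mul_prod_erase Finset.univ _ (Finset.mem_univ i0),
      Finset.prod_congr rfl (fun i hi => by
        simp only [hg, if_neg (Finset.ne_of_mem_erase hi)]
        exact stdnpdf_integral :
        ∀ i ∈ Finset.univ.erase i0, (∫ t, g i t) = 1),
      Finset.prod_const_one, mul_one]
    simp [hg]

lemma gpdf_nonneg (d : ℕ) (z : EuclideanSpace ℝ (Fin d)) : 0 ≤ gpdf d z := by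
  unfold gpdf; positivity

/-- if `∫ ψ(z) p(z) dz = s`, then for any unit vector `u`,
`∫ ψ(z)(u·z)p(z) dz ≤ ∫ 1{u·z ≥ -Φ⁻¹(s)}(u·z)p(z) dz = φ(Φ⁻¹(s))`. -/
theorem stmt_5 (d : ℕ) (ψ : EuclideanSpace ℝ (Fin d) → ℝ) (hmeas : Measurable ψ)
    (hrange : ∀ z, ψ z ∈ Set.Icc (0:ℝ) 1) (s : ℝ) (hs : s ∈ Set.Ioo (0:ℝ) 1)
    (hint : ∫ z, ψ z * gpdf d z = s)
    (u : EuclideanSpace ℝ (Fin d)) (hu : ‖u‖ = 1) :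
    (∫ z, ψ z * (inner ℝ u z : ℝ) * gpdf d z) ≤
      (∫ z, Set.indicator {w : EuclideanSpace ℝ (Fin d) | -stdninv s ≤ (inner ℝ u w : ℝ)}
        (fun w => (inner ℝ u w : ℝ)) z * gpdf d z) ∧
    (∫ z, Set.indicator {w : EuclideanSpace ℝ (Fin d) | -stdninv s ≤ (inner ℝ u w : ℝ)}
        (fun w => (inner ℝ u w : ℝ)) z * gpdf d z) = stdnpdf (stdninv s) := by
  classical
  set c : ℝ := stdninv s with hcdef
  have hccdf : stdncdf c = s := stdncdf_stdninv hs
  set A : Set (EuclideanSpace ℝ (Fin d)) := {w | -c ≤ (inner ℝ u w : ℝ)} with hA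
  have hgpdf_cont : Continuous (gpdf d) := by
    unfold gpdf
    exact continuous_const.mul (Real.continuous_exp.comp
      (((continuous_norm.pow 2).neg).div_const 2))
  -- integrability facts via `key`
  obtain ⟨IG0, _⟩ := key d u hu (fun _ => 1) (by simpa using stdnpdf_integrable)
  have IG : Integrable (gpdf d) := by simpa using IG0
  have habs : Integrable (fun t => |t| * stdnpdf t) := by
    have := stdnpdf_mul_integrable.abs
    simpa [abs_mul, abs_of_nonneg (stdnpdf_nonneg _)] using this
  obtain ⟨ITabs, _⟩ := key d u hu (fun t => |t|) habs
  have e1 : (fun t => Set.indicator (Set.Ici (-c)) (fun _ => (1:ℝ)) t * stdnpdf t)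
      = Set.indicator (Set.Ici (-c)) stdnpdf := by
    funext t; by_cases h : t ∈ Set.Ici (-c) <;> simp [Set.indicator_apply, h]
  obtain ⟨Iind1, Eind1⟩ := key d u hu (Set.indicator (Set.Ici (-c)) (fun _ => (1:ℝ)))
    (e1 ▸ stdnpdf_integrable.indicator measurableSet_Ici)
  have e2 : (fun t => Set.indicator (Set.Ici (-c)) id t * stdnpdf t)
      = Set.indicator (Set.Ici (-c)) (fun t => t * stdnpdf t) := by
    funext t; by_cases h : t ∈ Set.Ici (-c) <;> simp [Set.indicator_apply, h]
  obtain ⟨IindT, EindT⟩ := key d u hu (Set.indicator (Set.Ici (-c)) id)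
    (e2 ▸ stdnpdf_mul_integrable.indicator measurableSet_Ici)
  -- pointwise identification of the indicator integrand
  have hindA : ∀ z : EuclideanSpace ℝ (Fin d),
      Set.indicator A (fun w => (inner ℝ u w : ℝ)) z
        = Set.indicator (Set.Ici (-c)) id (inner ℝ u z : ℝ) := by
    intro z
    by_cases h : -c ≤ (inner ℝ u z : ℝ)
    · rw [Set.indicator_of_mem (by exact h), Set.indicator_of_mem (by exact h)]
      rfl
    · rw [Set.indicator_of_notMem (by exact h), Set.indicator_of_notMem (by exact h)]
  have hindA1 : ∀ z : EuclideanSpace ℝ (Fin d),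
      Set.indicator A (fun _ => (1:ℝ)) z
        = Set.indicator (Set.Ici (-c)) (fun _ => (1:ℝ)) (inner ℝ u z : ℝ) := by
    intro z
    by_cases h : -c ≤ (inner ℝ u z : ℝ)
    · rw [Set.indicator_of_mem (by exact h), Set.indicator_of_mem (by exact h)]
    · rw [Set.indicator_of_notMem (by exact h), Set.indicator_of_notMem (by exact h)]
  -- the RHS integral equals stdnpdf c
  have hfunT : (fun z => Set.indicator A (fun w => (inner ℝ u w : ℝ)) z * gpdf d z)
      = fun z => Set.indicator (Set.Ici (-c)) id (inner ℝ u z : ℝ) * gpdf d z :=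
    funext fun z => by rw [hindA z]
  have hfun1 : (fun z => Set.indicator A (fun _ => (1:ℝ)) z * gpdf d z)
      = fun z => Set.indicator (Set.Ici (-c)) (fun _ => (1:ℝ)) (inner ℝ u z : ℝ) * gpdf d z :=
    funext fun z => by rw [hindA1 z]
  have hRHS : (∫ z, Set.indicator A (fun w => (inner ℝ u w : ℝ)) z * gpdf d z) = stdnpdf c := by
    rw [hfunT, EindT, e2, MeasureTheory.integral_indicator measurableSet_Ici,
      int_Ici_id_stdnpdf]
  have hIND1 : (∫ z, Set.indicator A (fun _ => (1:ℝ)) z * gpdf d z) = s := by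
    rw [hfun1, Eind1, e1, MeasureTheory.integral_indicator measurableSet_Ici,
      int_Ici_stdnpdf, hccdf]
  -- integrability of the various E-space integrands
  have IindTz : Integrable (fun z => Set.indicator A (fun w => (inner ℝ u w : ℝ)) z * gpdf d z) := by
    rw [hfunT]; exact IindT
  have Iind1z : Integrable (fun z => Set.indicator A (fun _ => (1:ℝ)) z * gpdf d z) := by
    rw [hfun1]; exact Iind1
  have hinner_cont : Continuous (fun z : EuclideanSpace ℝ (Fin d) => (inner ℝ u z : ℝ)) :=
    Continuous.inner continuous_const continuous_id
  have Iψg : Integrable (fun z => ψ z * gpdf d z) := by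
    refine Integrable.mono' IG
      ((hmeas.mul hgpdf_cont.measurable).aestronglyMeasurable)
      (Filter.Eventually.of_forall fun z => ?_)
    rw [Real.norm_eq_abs, abs_mul, abs_of_nonneg (gpdf_nonneg d z),
      abs_of_nonneg (hrange z).1]
    calc ψ z * gpdf d z ≤ 1 * gpdf d z :=
          mul_le_mul_of_nonneg_right (hrange z).2 (gpdf_nonneg d z)
      _ = gpdf d z := one_mul _
  have IψT : Integrable (fun z => ψ z * (inner ℝ u z : ℝ) * gpdf d z) := by
    refine Integrable.mono' ITabs
      (((hmeas.mul hinner_cont.measurable).mul hgpdf_cont.measurable).aestronglyMeasurable)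
      (Filter.Eventually.of_forall fun z => ?_)
    rw [Real.norm_eq_abs, abs_mul, abs_mul, abs_of_nonneg (gpdf_nonneg d z),
      abs_of_nonneg (hrange z).1]
    have h1 : ψ z * |(inner ℝ u z : ℝ)| ≤ 1 * |(inner ℝ u z : ℝ)| :=
      mul_le_mul_of_nonneg_right (hrange z).2 (abs_nonneg _)
    calc ψ z * |(inner ℝ u z : ℝ)| * gpdf d z
        ≤ 1 * |(inner ℝ u z : ℝ)| * gpdf d z :=
          mul_le_mul_of_nonneg_right h1 (gpdf_nonneg d z)
      _ = |(inner ℝ u z : ℝ)| * gpdf d z := by ring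
  -- pointwise inequality
  have hpt : ∀ z, ψ z * ((inner ℝ u z : ℝ) + c) * gpdf d z
      ≤ Set.indicator A (fun w => (inner ℝ u w : ℝ) + c) z * gpdf d z := by
    intro z
    apply mul_le_mul_of_nonneg_right _ (gpdf_nonneg d z)
    by_cases h : z ∈ A
    · rw [Set.indicator_of_mem h]
      have h0 : (0:ℝ) ≤ (inner ℝ u z : ℝ) + c := by
        have : -c ≤ (inner ℝ u z : ℝ) := h
        linarith
      nlinarith [(hrange z).1, (hrange z).2]
    · rw [Set.indicator_of_notMem h]
      have h0 : (inner ℝ u z : ℝ) + c < 0 := by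
        have : ¬ (-c ≤ (inner ℝ u z : ℝ)) := h
        push_neg at this
        linarith
      nlinarith [(hrange z).1]
  have eL : (fun z => ψ z * ((inner ℝ u z : ℝ) + c) * gpdf d z)
      = fun z => ψ z * (inner ℝ u z : ℝ) * gpdf d z + c * (ψ z * gpdf d z) :=
    funext fun z => by ring
  have eR : (fun z => Set.indicator A (fun w => (inner ℝ u w : ℝ) + c) z * gpdf d z)
      = fun z => Set.indicator A (fun w => (inner ℝ u w : ℝ)) z * gpdf d z
          + c * (Set.indicator A (fun _ => (1:ℝ)) z * gpdf d z) := by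
    funext z
    by_cases h : z ∈ A
    · rw [Set.indicator_of_mem h, Set.indicator_of_mem h, Set.indicator_of_mem h]
      ring
    · rw [Set.indicator_of_notMem h, Set.indicator_of_notMem h, Set.indicator_of_notMem h]
      ring
  have hmono : (∫ z, (ψ z * (inner ℝ u z : ℝ) * gpdf d z + c * (ψ z * gpdf d z)))
      ≤ ∫ z, (Set.indicator A (fun w => (inner ℝ u w : ℝ)) z * gpdf d z
          + c * (Set.indicator A (fun _ => (1:ℝ)) z * gpdf d z)) := by
    refine integral_mono (IψT.add (Iψg.const_mul c)) (IindTz.add (Iind1z.const_mul c)) ?_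
    intro z
    calc ψ z * (inner ℝ u z : ℝ) * gpdf d z + c * (ψ z * gpdf d z)
        = ψ z * ((inner ℝ u z : ℝ) + c) * gpdf d z := by ring
      _ ≤ Set.indicator A (fun w => (inner ℝ u w : ℝ) + c) z * gpdf d z := hpt z
      _ = Set.indicator A (fun w => (inner ℝ u w : ℝ)) z * gpdf d z
          + c * (Set.indicator A (fun _ => (1:ℝ)) z * gpdf d z) := congrFun eR z
  rw [integral_add IψT (Iψg.const_mul c), integral_add IindTz (Iind1z.const_mul c),
    integral_const_mul, integral_const_mul, hint, hIND1, hRHS] at hmono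
  exact ⟨by rw [hRHS]; linarith, hRHS⟩

end Aux
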